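/- Let P, P̃ be probability measures on Ξ = Ξ₁×…×Ξ_T with coordinate filtration (F_t), and for each t let π_t(·×· | x_{1:t−1}, y_{1:t−1}) be kernels on Ξ_t×Ξ_t whose marginals are the disintegration kernels P_t(·|x_{1:t−1}) and P̃_t(·|y_{1:t−1}). Let π be the measure on Ξ×Ξ obtained by composing these kernels. Then the conditional marginals of π satisfy π(A×Ξ | x_{1:t}, y_{1:t}) = P(A | x_{1:t}) and π(Ξ×B | x_{1:t}, y_{1:t}) = P̃(B | y_{1:t}) for all measurable A, B and all t ∈ {0,…,T−1}. -/

import Mathlib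

open MeasureTheory Filter

section Aux

variable {α β γ : Type*} [MeasurableSpace α] [MeasurableSpace β] [MeasurableSpace γ]

/-- Pushforward of a bind. -/
lemma measure_map_bind (m : Measure α) (f : α → Measure β) (g : β → γ)
    (hf : Measurable f) (hg : Measurable g) :
    (m.bind f).map g = m.bind (fun a => (f a).map g) := by
  have hfg : Measurable fun a => (f a).map g := by
    exact (Measure.measurable_map _ hg).comp hf
  ext s hs
  rw [Measure.map_apply hg hs, Measure.bind_apply (hg hs) hf.aemeasurable,
    Measure.bind_apply hs hfg.aemeasurable]
  simp_rw [Measure.map_apply hg hs]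

/-- Bind of a pushforward. -/
lemma measure_bind_map (m : Measure α) (g : α → β) (f : β → Measure γ)
    (hg : Measurable g) (hf : Measurable f) :
    (m.map g).bind f = m.bind (fun a => f (g a)) := by
  have hfg : Measurable fun a => f (g a) := by exact hf.comp hg
  ext s hs
  have hco : Measurable fun b => f b s := by exact (Measure.measurable_coe hs).comp hf
  rw [Measure.bind_apply hs hf.aemeasurable, Measure.bind_apply hs hfg.aemeasurable, lintegral_map hco hg]

/-- Measurability of a pushforward with parameter-dependent map. -/
lemma measurable_map_param (κ : α → Measure β) (hκ : Measurable κ)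
    (hprob : ∀ a, IsProbabilityMeasure (κ a))
    (f : α → β → γ) (hf : Measurable (fun p : α × β => f p.1 p.2)) :
    Measurable fun a => (κ a).map (f a) := by
  set κ' : ProbabilityTheory.Kernel α β := ⟨κ, hκ⟩ with hκ'
  have : ProbabilityTheory.IsMarkovKernel κ' := ⟨hprob⟩
  apply Measure.measurable_of_measurable_coe
  intro s hs
  have h1 : ∀ a, (κ a).map (f a) s = κ' a (Prod.mk a ⁻¹' ((fun p : α × β => f p.1 p.2) ⁻¹' s)) := by
    intro a
    have hfa : Measurable (f a) := by exact hf.comp measurable_prodMk_left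
    rw [Measure.map_apply hfa hs]
    rfl
  simp_rw [h1]
  exact ProbabilityTheory.Kernel.measurable_kernel_prodMk_left (hf hs)

end Aux

/-- The conditional measure `P(· | x_{1:t})` of the process measure built from the
disintegration kernels `K`: coordinates `< t` are frozen at `x` and the future coordinates
are obtained by composing the kernels stage by stage. -/
noncomputable def composeFrom {T : ℕ} {Ξ : Fin T → Type*} [∀ t, MeasurableSpace (Ξ t)]
    (K : ∀ t : Fin T, (∀ s, Ξ s) → Measure (Ξ t)) (t : ℕ) (x : ∀ s, Ξ s) :
    Measure (∀ s, Ξ s) :=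
  if h : t < T then
    (K ⟨t, h⟩ x).bind (fun u => composeFrom K (t + 1) (Function.update x ⟨t, h⟩ u))
  else Measure.dirac x
  termination_by T - t

/-- The composed bivariate measure `π(· | x_{1:t}, y_{1:t})` on `Ξ × Ξ`, obtained by
composing the stagewise bivariate kernels `ρ_t`. -/
noncomputable def composePair {T : ℕ} {Ξ : Fin T → Type*} [∀ t, MeasurableSpace (Ξ t)]
    (ρ : ∀ t : Fin T, ((∀ s, Ξ s) × (∀ s, Ξ s)) → Measure (Ξ t × Ξ t))
    (t : ℕ) (p : (∀ s, Ξ s) × (∀ s, Ξ s)) : Measure ((∀ s, Ξ s) × (∀ s, Ξ s)) :=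
  if h : t < T then
    (ρ ⟨t, h⟩ p).bind (fun uv =>
      composePair ρ (t + 1)
        (Function.update p.1 ⟨t, h⟩ uv.1, Function.update p.2 ⟨t, h⟩ uv.2))
  else Measure.dirac p
  termination_by T - t

section Meas

variable {T : ℕ} {Ξ : Fin T → Type*} [∀ t, MeasurableSpace (Ξ t)]

lemma measurable_composeFrom (K : ∀ t : Fin T, (∀ s, Ξ s) → Measure (Ξ t))
    (hK : ∀ t x, IsProbabilityMeasure (K t x)) (hKm : ∀ t, Measurable (K t)) :
    ∀ n t, T - t = n → Measurable (composeFrom K t) := by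
  intro n
  induction n with
  | zero =>
    intro t ht
    have h : ¬ t < T := by omega
    have heq : composeFrom K t = fun x => Measure.dirac x := by
      funext x; rw [composeFrom, dif_neg h]
    rw [heq]
    exact Measure.measurable_dirac
  | succ n ih =>
    intro t ht
    have h : t < T := by omega
    have hm1 : Measurable (composeFrom K (t + 1)) := ih (t + 1) (by omega)
    have heq : composeFrom K t = fun x =>
        ((K ⟨t, h⟩ x).map (fun u => Function.update x ⟨t, h⟩ u)).bind
          (composeFrom K (t + 1)) := by
      funext x
      rw [composeFrom, dif_pos h]
      exact (measure_bind_map (K ⟨t, h⟩ x) (fun u => Function.update x ⟨t, h⟩ u)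
        (composeFrom K (t + 1)) (measurable_update _) hm1).symm
    rw [heq]
    exact (Measure.measurable_bind' hm1).comp
      (measurable_map_param _ (hKm _) (hK _)
        (fun x u => Function.update x ⟨t, h⟩ u)
        (measurable_update'))

lemma measurable_composePair
    (ρ : ∀ t : Fin T, ((∀ s, Ξ s) × (∀ s, Ξ s)) → Measure (Ξ t × Ξ t))
    (hρm : ∀ t, Measurable (ρ t))
    (hρp : ∀ t p, IsProbabilityMeasure (ρ t p)) :
    ∀ n t, T - t = n → Measurable (composePair ρ t) := by
  intro n
  induction n with
  | zero =>
    intro t ht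
    have h : ¬ t < T := by omega
    have heq : composePair ρ t = fun p => Measure.dirac p := by
      funext p; rw [composePair, dif_neg h]
    rw [heq]
    exact Measure.measurable_dirac
  | succ n ih =>
    intro t ht
    have h : t < T := by omega
    have hm1 : Measurable (composePair ρ (t + 1)) := ih (t + 1) (by omega)
    have hupd : Measurable (fun q : ((∀ s, Ξ s) × (∀ s, Ξ s)) × (Ξ ⟨t, h⟩ × Ξ ⟨t, h⟩) =>
        (Function.update q.1.1 ⟨t, h⟩ q.2.1, Function.update q.1.2 ⟨t, h⟩ q.2.2)) :=
      (measurable_update'.comp (measurable_fst.fst.prodMk measurable_snd.fst)).prodMk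
        (measurable_update'.comp (measurable_fst.snd.prodMk measurable_snd.snd))
    have heq : composePair ρ t = fun p =>
        ((ρ ⟨t, h⟩ p).map (fun uv =>
          (Function.update p.1 ⟨t, h⟩ uv.1, Function.update p.2 ⟨t, h⟩ uv.2))).bind
          (composePair ρ (t + 1)) := by
      funext p
      rw [composePair, dif_pos h]
      exact (measure_bind_map (ρ ⟨t, h⟩ p)
        (fun uv => (Function.update p.1 ⟨t, h⟩ uv.1, Function.update p.2 ⟨t, h⟩ uv.2))
        (composePair ρ (t + 1))
        ((measurable_update'.comp (measurable_const.prodMk measurable_fst)).prodMk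
          (measurable_update'.comp (measurable_const.prodMk measurable_snd))) hm1).symm
    rw [heq]
    exact (Measure.measurable_bind' hm1).comp
      (measurable_map_param _ (hρm _) (hρp _) _ hupd)

end Meas

/-- If the stagewise kernels `ρ_t(·×·|x_{1:t-1},y_{1:t-1})` have marginals
`P_t(·|x_{1:t-1})` and `P̃_t(·|y_{1:t-1})`, then the conditional marginals of the
composed measure `π` satisfy `π(A×Ξ | x_{1:t}, y_{1:t}) = P(A | x_{1:t})` and
`π(Ξ×B | x_{1:t}, y_{1:t}) = P̃(B | y_{1:t})` for all `t ∈ {0,…,T-1}`. -/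
theorem composePair_conditional_marginals {T : ℕ} {Ξ : Fin T → Type*}
    [∀ t, MeasurableSpace (Ξ t)]
    (K K' : ∀ t : Fin T, (∀ s, Ξ s) → Measure (Ξ t))
    (hK : ∀ t x, IsProbabilityMeasure (K t x)) (hK' : ∀ t y, IsProbabilityMeasure (K' t y))
    (hKm : ∀ t, Measurable (K t)) (hK'm : ∀ t, Measurable (K' t))
    (ρ : ∀ t : Fin T, ((∀ s, Ξ s) × (∀ s, Ξ s)) → Measure (Ξ t × Ξ t))
    (hρm : ∀ t, Measurable (ρ t))
    (hρ1 : ∀ t p, (ρ t p).map Prod.fst = K t p.1)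
    (hρ2 : ∀ t p, (ρ t p).map Prod.snd = K' t p.2) :
    ∀ t : ℕ, t < T → ∀ p : (∀ s, Ξ s) × (∀ s, Ξ s),
      (composePair ρ t p).map Prod.fst = composeFrom K t p.1 ∧
      (composePair ρ t p).map Prod.snd = composeFrom K' t p.2 := by
  have hρp : ∀ t p, IsProbabilityMeasure (ρ t p) := by
    intro t p
    constructor
    have : (ρ t p).map Prod.fst Set.univ = ρ t p Set.univ := by
      rw [Measure.map_apply measurable_fst MeasurableSet.univ, Set.preimage_univ]
    rw [← this, hρ1]
    exact measure_univ
  have main : ∀ n t, T - t = n → ∀ p : (∀ s, Ξ s) × (∀ s, Ξ s),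
      (composePair ρ t p).map Prod.fst = composeFrom K t p.1 ∧
      (composePair ρ t p).map Prod.snd = composeFrom K' t p.2 := by
    intro n
    induction n with
    | zero =>
      intro t ht p
      have h : ¬ t < T := by omega
      rw [composePair, dif_neg h, composeFrom, dif_neg h, composeFrom, dif_neg h]
      constructor
      · rw [Measure.map_dirac' measurable_fst]
      · rw [Measure.map_dirac' measurable_snd]
    | succ n ih =>
      intro t ht p
      have h : t < T := by omega
      have hmCP : Measurable (composePair ρ (t + 1)) :=
        measurable_composePair ρ hρm hρp n (t + 1) (by omega)
      have hmCF : Measurable (composeFrom K (t + 1)) :=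
        measurable_composeFrom K hK hKm n (t + 1) (by omega)
      have hmCF' : Measurable (composeFrom K' (t + 1)) :=
        measurable_composeFrom K' hK' hK'm n (t + 1) (by omega)
      have hmG : Measurable (fun uv : Ξ ⟨t, h⟩ × Ξ ⟨t, h⟩ =>
          composePair ρ (t + 1)
            (Function.update p.1 ⟨t, h⟩ uv.1, Function.update p.2 ⟨t, h⟩ uv.2)) :=
        hmCP.comp
          ((measurable_update'.comp (measurable_const.prodMk measurable_fst)).prodMk
            (measurable_update'.comp (measurable_const.prodMk measurable_snd)))
      rw [composePair, dif_pos h, composeFrom, dif_pos h, composeFrom, dif_pos h]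
      constructor
      · rw [measure_map_bind _ _ _ hmG measurable_fst]
        have : (fun uv : Ξ ⟨t, h⟩ × Ξ ⟨t, h⟩ =>
            (composePair ρ (t + 1)
              (Function.update p.1 ⟨t, h⟩ uv.1, Function.update p.2 ⟨t, h⟩ uv.2)).map Prod.fst)
            = fun uv => composeFrom K (t + 1) (Function.update p.1 ⟨t, h⟩ uv.1) := by
          funext uv
          exact (ih (t + 1) (by omega) _).1
        rw [this]
        have hstep : ((ρ ⟨t, h⟩ p).map Prod.fst).bind
            (fun u => composeFrom K (t + 1) (Function.update p.1 ⟨t, h⟩ u)) =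
            (ρ ⟨t, h⟩ p).bind (fun uv =>
              composeFrom K (t + 1) (Function.update p.1 ⟨t, h⟩ uv.1)) := by
          exact measure_bind_map (ρ ⟨t, h⟩ p) Prod.fst
            (fun u => composeFrom K (t + 1) (Function.update p.1 ⟨t, h⟩ u))
            measurable_fst (by exact hmCF.comp (measurable_update _))
        rw [← hstep, hρ1 ⟨t, h⟩ p]
      · rw [measure_map_bind _ _ _ hmG measurable_snd]
        have : (fun uv : Ξ ⟨t, h⟩ × Ξ ⟨t, h⟩ =>
            (composePair ρ (t + 1)
              (Function.update p.1 ⟨t, h⟩ uv.1, Function.update p.2 ⟨t, h⟩ uv.2)).map Prod.snd)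
            = fun uv => composeFrom K' (t + 1) (Function.update p.2 ⟨t, h⟩ uv.2) := by
          funext uv
          exact (ih (t + 1) (by omega) _).2
        rw [this]
        have hstep : ((ρ ⟨t, h⟩ p).map Prod.snd).bind
            (fun u => composeFrom K' (t + 1) (Function.update p.2 ⟨t, h⟩ u)) =
            (ρ ⟨t, h⟩ p).bind (fun uv =>
              composeFrom K' (t + 1) (Function.update p.2 ⟨t, h⟩ uv.2)) := by
          exact measure_bind_map (ρ ⟨t, h⟩ p) Prod.snd
            (fun u => composeFrom K' (t + 1) (Function.update p.2 ⟨t, h⟩ u))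
            measurable_snd (by exact hmCF'.comp (measurable_update _))
        rw [← hstep, hρ2 ⟨t, h⟩ p]
  intro t _ p
  exact main (T - t) t rfl p
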